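/- Define μ̃(s) = −s·log₂((1 + c^{1/s})/2) for s > 0 and c ∈ (0,1). Then μ̃ is concave in s, its derivative at s is μ̃'(s) = −log₂((1+c^{1/s})/2) + (c^{1/s} ln c) / (s(1+c^{1/s}) ln 2), and μ̃'(1) = 1 − log₂(1+c) + (c/(1+c))·log₂ c. -/

import Mathlib

/-- The function μ̃ of the binary expurgated bound. -/
noncomputable def muTilde (c s : ℝ) : ℝ := -s * Real.logb 2 ((1 + c ^ (1 / s)) / 2)

private lemma hasDerivAt_rpow_inv {c s : ℝ} (hc : 0 < c) (hs : 0 < s) :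
    HasDerivAt (fun t : ℝ => c ^ (1 / t)) (c ^ (1 / s) * (Real.log c * -(1 / s ^ 2))) s := by
  have h1 : HasDerivAt (fun t : ℝ => 1 / t) (-(1 / s ^ 2)) s := by
    simpa [one_div] using hasDerivAt_inv hs.ne'
  have h3 := (h1.const_mul (Real.log c)).exp
  have he : (fun t : ℝ => Real.exp (Real.log c * (1 / t))) = fun t : ℝ => c ^ (1 / t) := by
    funext t; rw [Real.rpow_def_of_pos hc, mul_comm]
  rw [he] at h3
  convert h3 using 1
  rw [Real.rpow_def_of_pos hc, mul_comm]

private lemma muTilde_hasDerivAt {c s : ℝ} (hc : 0 < c) (hs : 0 < s) :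
    HasDerivAt (muTilde c)
      (-Real.logb 2 ((1 + c ^ (1 / s)) / 2)
        + (c ^ (1 / s) * Real.log c) / (s * (1 + c ^ (1 / s)) * Real.log 2)) s := by
  have hg := hasDerivAt_rpow_inv hc hs
  have hgpos : (0 : ℝ) < c ^ (1 / s) := Real.rpow_pos_of_pos hc _
  have hden : (1 + c ^ (1 / s)) / 2 ≠ 0 := by positivity
  have hf : HasDerivAt (fun t : ℝ => (1 + c ^ (1 / t)) / 2)
      (c ^ (1 / s) * (Real.log c * -(1 / s ^ 2)) / 2) s :=
    ((hg.const_add 1)).div_const 2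
  have hlog := hf.log hden
  have hmul : HasDerivAt (fun t : ℝ => -t * Real.log ((1 + c ^ (1 / t)) / 2))
      ((-1) * Real.log ((1 + c ^ (1 / s)) / 2)
        + -s * (c ^ (1 / s) * (Real.log c * -(1 / s ^ 2)) / 2 / ((1 + c ^ (1 / s)) / 2))) s :=
    (hasDerivAt_id s).neg.mul hlog
  have hfinal := hmul.div_const (Real.log 2)
  have heq : (fun t : ℝ => -t * Real.log ((1 + c ^ (1 / t)) / 2) / Real.log 2) = muTilde c := by
    funext t; rw [muTilde, Real.logb]; ring
  rw [heq] at hfinal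
  refine hfinal.congr_deriv ?_
  have h2 : Real.log 2 ≠ 0 := ne_of_gt (Real.log_pos (by norm_num))
  have hs' : s ≠ 0 := hs.ne'
  have h1g : (1 : ℝ) + c ^ (1 / s) ≠ 0 := by positivity
  rw [Real.logb]
  field_simp

private lemma deriv1_hasDerivAt {c s : ℝ} (hc : 0 < c) (hs : 0 < s) :
    HasDerivAt (fun t : ℝ => -Real.logb 2 ((1 + c ^ (1 / t)) / 2)
        + (c ^ (1 / t) * Real.log c) / (t * (1 + c ^ (1 / t)) * Real.log 2))
      (-(c ^ (1 / s) * (Real.log c) ^ 2) / (s ^ 3 * (1 + c ^ (1 / s)) ^ 2 * Real.log 2)) s := by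
  have hg := hasDerivAt_rpow_inv hc hs
  have hgpos : (0 : ℝ) < c ^ (1 / s) := Real.rpow_pos_of_pos hc _
  have h2 : Real.log 2 ≠ 0 := ne_of_gt (Real.log_pos (by norm_num))
  have h2p : (0:ℝ) < Real.log 2 := Real.log_pos (by norm_num)
  have hs' : s ≠ 0 := hs.ne'
  have h1g : (1 : ℝ) + c ^ (1 / s) ≠ 0 := by positivity
  have hden : (1 + c ^ (1 / s)) / 2 ≠ 0 := by positivity
  -- term A : -logb 2 ((1+g)/2)
  have hf : HasDerivAt (fun t : ℝ => (1 + c ^ (1 / t)) / 2)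
      (c ^ (1 / s) * (Real.log c * -(1 / s ^ 2)) / 2) s :=
    ((hg.const_add 1)).div_const 2
  have hA : HasDerivAt (fun t : ℝ => -(Real.log ((1 + c ^ (1 / t)) / 2) / Real.log 2)) _ s :=
    ((hf.log hden).div_const (Real.log 2)).neg
  have hAeq : (fun t : ℝ => -(Real.log ((1 + c ^ (1 / t)) / 2) / Real.log 2))
      = fun t : ℝ => -Real.logb 2 ((1 + c ^ (1 / t)) / 2) := by
    funext t; rw [Real.logb]
  rw [hAeq] at hA
  -- term B : (g * log c) / (t * (1+g) * log 2)
  have hnum : HasDerivAt (fun t : ℝ => c ^ (1 / t) * Real.log c)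
      (c ^ (1 / s) * (Real.log c * -(1 / s ^ 2)) * Real.log c) s := hg.mul_const _
  have hdenf : HasDerivAt (fun t : ℝ => t * (1 + c ^ (1 / t)) * Real.log 2)
      ((1 * (1 + c ^ (1 / s)) + s * (c ^ (1 / s) * (Real.log c * -(1 / s ^ 2)))) * Real.log 2) s :=
    ((hasDerivAt_id s).mul (hg.const_add 1)).mul_const _
  have hdenne : s * (1 + c ^ (1 / s)) * Real.log 2 ≠ 0 := by positivity
  have hB := hnum.div hdenf hdenne
  have hsum := hA.add hB
  refine hsum.congr_deriv ?_
  field_simp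
  ring

theorem muTilde_concave_and_deriv (c : ℝ) (hc : c ∈ Set.Ioo (0 : ℝ) 1) :
    ConcaveOn ℝ (Set.Ioi (0 : ℝ)) (muTilde c) ∧
    (∀ s : ℝ, 0 < s → HasDerivAt (muTilde c)
      (-Real.logb 2 ((1 + c ^ (1 / s)) / 2)
        + (c ^ (1 / s) * Real.log c) / (s * (1 + c ^ (1 / s)) * Real.log 2)) s) ∧
    (-Real.logb 2 ((1 + c ^ ((1 : ℝ) / 1)) / 2)
        + (c ^ ((1 : ℝ) / 1) * Real.log c) / (1 * (1 + c ^ ((1 : ℝ) / 1)) * Real.log 2))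
      = 1 - Real.logb 2 (1 + c) + (c / (1 + c)) * Real.logb 2 c := by
  obtain ⟨hc0, hc1⟩ := hc
  have h2p : (0:ℝ) < Real.log 2 := Real.log_pos (by norm_num)
  refine ⟨?_, fun s hs => muTilde_hasDerivAt hc0 hs, ?_⟩
  · have hint : interior (Set.Ioi (0:ℝ)) = Set.Ioi 0 := interior_Ioi
    refine concaveOn_of_hasDerivWithinAt2_nonpos (convex_Ioi 0)
      (f' := fun t : ℝ => -Real.logb 2 ((1 + c ^ (1 / t)) / 2)
        + (c ^ (1 / t) * Real.log c) / (t * (1 + c ^ (1 / t)) * Real.log 2))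
      (f'' := fun t : ℝ => -(c ^ (1 / t) * (Real.log c) ^ 2)
        / (t ^ 3 * (1 + c ^ (1 / t)) ^ 2 * Real.log 2))
      (fun x hx => ((muTilde_hasDerivAt hc0 hx).continuousAt).continuousWithinAt) ?_ ?_ ?_
    · intro x hx
      rw [hint] at hx ⊢
      exact (muTilde_hasDerivAt hc0 hx).hasDerivWithinAt
    · intro x hx
      rw [hint] at hx ⊢
      exact (deriv1_hasDerivAt hc0 hx).hasDerivWithinAt
    · intro x hx
      rw [hint] at hx
      have hxp : (0:ℝ) < x := hx
      have hgpos : (0 : ℝ) < c ^ (1 / x) := Real.rpow_pos_of_pos hc0 _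
      have hdp : (0:ℝ) < x ^ 3 * (1 + c ^ (1 / x)) ^ 2 * Real.log 2 := by positivity
      have hnn : (0:ℝ) ≤ c ^ (1 / x) * (Real.log c) ^ 2 := by positivity
      show -(c ^ (1 / x) * (Real.log c) ^ 2) / (x ^ 3 * (1 + c ^ (1 / x)) ^ 2 * Real.log 2) ≤ 0
      rw [neg_div]
      exact neg_nonpos.mpr (div_nonneg hnn hdp.le)
  · have h11 : (1:ℝ)/1 = 1 := by norm_num
    rw [h11, Real.rpow_one]
    have h1c : (0:ℝ) < 1 + c := by linarith
    rw [Real.logb, Real.logb, Real.logb, Real.log_div h1c.ne' (by norm_num : (2:ℝ) ≠ 0)]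
    field_simp
    ring
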